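/- arXiv:1210.6401 — 3 statements merged into one kernel-verified Lean document; each statement's English description precedes it below -/
import Mathlib

section
/- Let p, q be positive integers, α : (ZMod p) × (ZMod q) → ℝ with α(i,j) ≥ 0, and let Φ_*(x) = Σ_{(i,j)} α(-i,-j) (J_p^i ⊗ J_q^j) x (J_p^i ⊗ J_q^j)*. Then for all i₀, k ∈ ZMod p and j₀, l ∈ ZMod q, Φ_*(E_{(i₀,j₀),(i₀+k,j₀+l)}) = Σ_{(i,j) ∈ (ZMod p) × (ZMod q)} α(i - i₀, j - j₀) E_{(i,j),(i+k,j+l)}; that is, under the isomorphism E_{(i,j),(i+k,j+l)} ↦ e_i ⊗ e_j, the restriction of Φ_* to each invariant subspace B_{kl} acts as the block circulant matrix Q = Σ_{(i,j)} α(i,j)(J_p^i ⊗ J_q^j). -/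
open Matrix Kronecker

noncomputable section

/-- The primary permutation (left-shift) matrix `J_p`. -/
def Jmat (p : ℕ) : Matrix (ZMod p) (ZMod p) ℂ :=
  Matrix.of fun i j => if j = i + 1 then 1 else 0

/-- The Kraus operator `J_p^i ⊗ J_q^j`. -/
def Kr (p q : ℕ) [NeZero p] [NeZero q] (i : ZMod p) (j : ZMod q) :
    Matrix (ZMod p × ZMod q) (ZMod p × ZMod q) ℂ :=
  (Jmat p ^ i.val) ⊗ₖ (Jmat q ^ j.val)

/-- The circulant completely positive map `Φ_*` associated with `α`. -/
def PhiStar (p q : ℕ) [NeZero p] [NeZero q] (α : ZMod p × ZMod q → ℝ)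
    (x : Matrix (ZMod p × ZMod q) (ZMod p × ZMod q) ℂ) :
    Matrix (ZMod p × ZMod q) (ZMod p × ZMod q) ℂ :=
  ∑ ij : ZMod p × ZMod q,
    (α (-ij.1, -ij.2) : ℂ) • (Kr p q ij.1 ij.2 * x * (Kr p q ij.1 ij.2)ᴴ)

lemma Jpow_apply (p : ℕ) [NeZero p] (n : ℕ) (i j : ZMod p) :
    (Jmat p ^ n) i j = if j = i + (n : ZMod p) then 1 else 0 := by
  induction n generalizing i j with
  | zero => simp [Matrix.one_apply, eq_comm]
  | succ n ih =>
    rw [pow_succ, Matrix.mul_apply]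
    simp only [ih]
    simp only [Jmat, Matrix.of_apply, ite_mul, one_mul, zero_mul]
    rw [Finset.sum_ite_eq' Finset.univ (i + (n : ZMod p))]
    simp [add_assoc]

lemma Kr_apply (p q : ℕ) [NeZero p] [NeZero q] (a : ZMod p) (b : ZMod q)
    (x y : ZMod p × ZMod q) :
    Kr p q a b x y = if y.1 = x.1 + a ∧ y.2 = x.2 + b then 1 else 0 := by
  rw [Kr, Matrix.kroneckerMap_apply, Jpow_apply, Jpow_apply, ZMod.natCast_val,
    ZMod.natCast_val, ZMod.cast_id', id, ZMod.cast_id', id, ite_and]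
  split <;> split <;> simp_all

lemma conj_apply {n : Type*} [Fintype n] [DecidableEq n]
    (K : Matrix n n ℂ) (u v x y : n) :
    (K * Matrix.single u v (1 : ℂ) * Kᴴ) x y = K x u * star (K y v) := by
  rw [Matrix.mul_apply, Finset.sum_eq_single v]
  · simp [Matrix.conjTranspose_apply]
  · intro c _ hc
    rw [Matrix.mul_single_apply_of_ne (hbj := hc), zero_mul]
  · simp

lemma Kr_conj (p q : ℕ) [NeZero p] [NeZero q] (a : ZMod p) (b : ZMod q)
    (u v : ZMod p × ZMod q) :
    Kr p q a b * Matrix.single u v (1 : ℂ) * (Kr p q a b)ᴴ =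
      Matrix.single (u.1 - a, u.2 - b) (v.1 - a, v.2 - b) (1 : ℂ) := by
  ext x y
  rw [conj_apply]
  simp only [Kr_apply, Matrix.single, Matrix.of_apply, Prod.ext_iff,
    sub_eq_iff_eq_add]
  split_ifs <;> simp_all

theorem stmt9 (p q : ℕ) [NeZero p] [NeZero q]
    (α : ZMod p × ZMod q → ℝ) (hα : ∀ ij, 0 ≤ α ij)
    (i₀ k : ZMod p) (j₀ l : ZMod q) :
    PhiStar p q α (Matrix.single (i₀, j₀) (i₀ + k, j₀ + l) (1 : ℂ)) =
      ∑ ij : ZMod p × ZMod q,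
        (α (ij.1 - i₀, ij.2 - j₀) : ℂ) •
          Matrix.single ij (ij.1 + k, ij.2 + l) (1 : ℂ) := by
  rw [PhiStar]
  refine Fintype.sum_equiv ((Equiv.subLeft i₀).prodCongr (Equiv.subLeft j₀)) _ _ ?_
  intro ab
  rw [Kr_conj]
  simp only [Equiv.prodCongr_apply, Equiv.subLeft_apply, Prod.map]
  simp only [sub_sub_cancel_left, add_sub_right_comm]
end
end

section
/- Let p, q be positive integers and α : (ZMod p) × (ZMod q) → ℝ with α(0,0) = 0, α(m,n) > 0 for all (m,n) ≠ (0,0), and Σ_{(m,n)} α(m,n) = 1. Let Q = Σ_{(i,j)} α(i,j)(J_p^i ⊗ J_q^j) − I, a real matrix indexed by (ZMod p) × (ZMod q). Then the Quantum Entropy Production Rate of the associated circulant quantum Markov semigroup with respect to the invariant state ρ = (1/(pq))·I, namely the limit lim_{t → 0⁺} (1/t) · Σ_{(m,n)} (exp(tQ))_{(0,0),(m,n)} · log( (exp(tQ))_{(0,0),(m,n)} / (exp(tQ))_{(0,0),(-m,-n)} ), exists and equals (1/2) Σ_{(m,n) ≠ (0,0)} (α(m,n) − α(-m,-n)) ·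 log( α(m,n) / α(-m,-n) ). -/
open Matrix Kronecker

noncomputable section

/-- The primary permutation (left-shift) matrix `J_p` over `ℝ`. -/
def JmatR (p : ℕ) : Matrix (ZMod p) (ZMod p) ℝ :=
  Matrix.of fun i j => if j = i + 1 then 1 else 0

/-- The real Kraus operator `J_p^i ⊗ J_q^j`. -/
def KrR (p q : ℕ) [NeZero p] [NeZero q] (i : ZMod p) (j : ZMod q) :
    Matrix (ZMod p × ZMod q) (ZMod p × ZMod q) ℝ :=
  (JmatR p ^ i.val) ⊗ₖ (JmatR q ^ j.val)

lemma JmatR_pow (p : ℕ) [NeZero p] (k : ℕ) (a b : ZMod p) :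
    (JmatR p ^ k) a b = if b = a + (k : ZMod p) then 1 else 0 := by
  induction k generalizing a b with
  | zero => simp [Matrix.one_apply, eq_comm]
  | succ k ih =>
      rw [pow_succ, Matrix.mul_apply]
      simp only [ih]
      simp only [JmatR, Matrix.of_apply, ite_mul, one_mul, zero_mul]
      rw [Finset.sum_ite_eq' Finset.univ (a + (k:ZMod p))]
      push_cast
      simp [add_assoc]

lemma KrR_entry (p q : ℕ) [NeZero p] [NeZero q] (i : ZMod p) (j : ZMod q)
    (mn : ZMod p × ZMod q) :
    KrR p q i j (0, 0) mn = if mn = (i, j) then 1 else 0 := by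
  obtain ⟨m, n⟩ := mn
  rw [KrR, Matrix.kroneckerMap_apply, JmatR_pow, JmatR_pow]
  simp only [ZMod.natCast_val, ZMod.cast_id, zero_add, Prod.mk.injEq]
  by_cases h1 : m = i <;> by_cases h2 : n = j <;> simp [h1, h2]

lemma Q_entry (p q : ℕ) [NeZero p] [NeZero q]
    (α : ZMod p × ZMod q → ℝ)
    (Q : Matrix (ZMod p × ZMod q) (ZMod p × ZMod q) ℝ)
    (hQ : Q = (∑ ij : ZMod p × ZMod q, α ij • KrR p q ij.1 ij.2) - 1)
    (mn : ZMod p × ZMod q) :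
    Q (0, 0) mn = α mn - if mn = (0, 0) then 1 else 0 := by
  subst hQ
  have : (∑ ij : ZMod p × ZMod q, α ij • KrR p q ij.1 ij.2) (0, 0) mn = α mn := by
    rw [Matrix.sum_apply]
    simp only [Matrix.smul_apply, KrR_entry, smul_eq_mul, mul_ite, mul_one, mul_zero]
    rw [Finset.sum_ite_eq Finset.univ mn]
    · simp
  rw [Matrix.sub_apply, this]
  congr 1
  simp [Matrix.one_apply, eq_comm]

lemma entry_hasDerivAt {n : Type*} [Fintype n] [DecidableEq n]
    (Q : Matrix n n ℝ) (i j : n) :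
    HasDerivAt (fun t : ℝ => NormedSpace.exp (t • Q) i j) (Q i j) 0 := by
  letI : SeminormedRing (Matrix n n ℝ) := Matrix.linftyOpSemiNormedRing
  letI : NormedRing (Matrix n n ℝ) := Matrix.linftyOpNormedRing
  letI : NormedAlgebra ℝ (Matrix n n ℝ) := Matrix.linftyOpNormedAlgebra
  have h := hasDerivAt_exp_smul_const (𝕂 := ℝ) Q (0 : ℝ)
  have h2 : HasDerivAt (fun t : ℝ => NormedSpace.exp (t • Q)) Q 0 := by
    have h' := h
    simp only [zero_smul, NormedSpace.exp_zero, one_mul] at h'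
    exact h'
  have hl := (Matrix.entryLinearMap ℝ ℝ i j).toContinuousLinearMap.hasFDerivAt.comp_hasDerivAt 0 h2
  exact hl

lemma sum_sym (p q : ℕ) [NeZero p] [NeZero q] (α : ZMod p × ZMod q → ℝ)
    (hpos : ∀ mn : ZMod p × ZMod q, mn ≠ (0, 0) → 0 < α mn) :
    (1 / 2) * ∑ mn ∈ Finset.univ.erase ((0 : ZMod p), (0 : ZMod q)),
        (α mn - α (-mn.1, -mn.2)) * Real.log (α mn / α (-mn.1, -mn.2))
      = ∑ mn ∈ Finset.univ.erase ((0 : ZMod p), (0 : ZMod q)),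
          α mn * Real.log (α mn / α (-mn.1, -mn.2)) := by
  have hne : ∀ mn : ZMod p × ZMod q, mn ≠ (0, 0) → ((-mn.1, -mn.2) : ZMod p × ZMod q) ≠ (0, 0) := by
    intro mn h hc
    apply h
    rw [Prod.ext_iff] at hc ⊢
    simp only [neg_eq_zero] at hc
    exact hc
  have key : ∑ mn ∈ Finset.univ.erase ((0 : ZMod p), (0 : ZMod q)),
        α (-mn.1, -mn.2) * Real.log (α mn / α (-mn.1, -mn.2))
      = ∑ mn ∈ Finset.univ.erase ((0 : ZMod p), (0 : ZMod q)),
        -(α mn * Real.log (α mn / α (-mn.1, -mn.2))) := by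
    refine Finset.sum_equiv (Equiv.neg (ZMod p × ZMod q)) ?_ ?_
    · intro mn
      simp only [Finset.mem_erase, Finset.mem_univ, and_true, Equiv.neg_apply]
      constructor
      · intro h hc; apply h; rw [Prod.ext_iff] at hc ⊢; simp only [Prod.fst_neg, Prod.snd_neg,
          neg_eq_zero] at hc; exact hc
      · intro h hc; apply h; rw [Prod.ext_iff] at hc ⊢; simp only [Prod.fst_neg, Prod.snd_neg,
          neg_eq_zero]; exact hc
    · intro mn hmn
      rw [Finset.mem_erase] at hmn
      have h1 : α mn ≠ 0 := (hpos mn hmn.1).ne'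
      have h2 : α (-mn.1, -mn.2) ≠ 0 := (hpos _ (hne mn hmn.1)).ne'
      simp only [Equiv.neg_apply, Prod.fst_neg, Prod.snd_neg, neg_neg]
      have : (-mn : ZMod p × ZMod q) = (-mn.1, -mn.2) := rfl
      rw [this]
      rw [Real.log_div h1 h2, Real.log_div h2 h1]
      ring
  rw [Finset.sum_congr rfl (fun mn _ => sub_mul (α mn) (α (-mn.1, -mn.2))
    (Real.log (α mn / α (-mn.1, -mn.2)))), Finset.sum_sub_distrib, key, Finset.sum_neg_distrib]
  ring

/-- The Quantum Entropy Production Rate of the circulant qms with respect to the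
invariant state `(1/(pq))·I` is the right derivative at `t = 0` of the relative
entropy `S(Ω_t, Ω̃_t)`, whose value is the displayed sum of the eigenvalues
`(exp(tQ))_{(0,0),(m,n)}` of the forward and backward states. -/
theorem stmt15 (p q : ℕ) [NeZero p] [NeZero q]
    (α : ZMod p × ZMod q → ℝ) (h0 : α (0, 0) = 0)
    (hpos : ∀ mn : ZMod p × ZMod q, mn ≠ (0, 0) → 0 < α mn)
    (hsum : ∑ mn : ZMod p × ZMod q, α mn = 1)
    (Q : Matrix (ZMod p × ZMod q) (ZMod p × ZMod q) ℝ)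
    (hQ : Q = (∑ ij : ZMod p × ZMod q, α ij • KrR p q ij.1 ij.2) - 1) :
    Filter.Tendsto
      (fun t : ℝ => (1 / t) *
        ∑ mn : ZMod p × ZMod q,
          NormedSpace.exp (t • Q) (0, 0) mn *
            Real.log (NormedSpace.exp (t • Q) (0, 0) mn /
              NormedSpace.exp (t • Q) (0, 0) (-mn.1, -mn.2)))
      (nhdsWithin 0 (Set.Ioi 0))
      (nhds ((1 / 2) *
        ∑ mn ∈ Finset.univ.erase ((0 : ZMod p), (0 : ZMod q)),
          (α mn - α (-mn.1, -mn.2)) * Real.log (α mn / α (-mn.1, -mn.2)))) := by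
  classical
  rw [sum_sym p q α hpos]
  set g : (ZMod p × ZMod q) → ℝ → ℝ :=
    fun mn t => NormedSpace.exp (t • Q) (0, 0) mn with hgdef
  have hne : ∀ mn : ZMod p × ZMod q, mn ≠ (0, 0) → ((-mn.1, -mn.2) : ZMod p × ZMod q) ≠ (0, 0) := by
    intro mn h hc
    apply h
    rw [Prod.ext_iff] at hc ⊢
    simp only [neg_eq_zero] at hc
    exact hc
  -- slope limit for each nonzero mn
  have hg : ∀ mn : ZMod p × ZMod q, mn ≠ (0, 0) →
      Filter.Tendsto (fun t : ℝ => g mn t / t) (nhdsWithin 0 (Set.Ioi 0)) (nhds (α mn)) := by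
    intro mn hmn
    have hd := entry_hasDerivAt Q (0, 0) mn
    rw [Q_entry p q α Q hQ mn, if_neg hmn, sub_zero] at hd
    have hg0 : g mn 0 = 0 := by
      have : ((0 : ℝ) • Q) = 0 := by simp
      simp only [hgdef, this, NormedSpace.exp_zero]
      exact Matrix.one_apply_ne fun h => hmn h.symm
    rw [hasDerivAt_iff_tendsto_slope] at hd
    have hsub : Set.Ioi (0 : ℝ) ⊆ {(0 : ℝ)}ᶜ := fun x hx => ne_of_gt hx
    refine (hd.mono_left (nhdsWithin_mono _ hsub)).congr' ?_
    filter_upwards [self_mem_nhdsWithin] with t ht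
    rw [slope_def_field]
    have h00 : NormedSpace.exp ((0 : ℝ) • Q) (0, 0) mn = 0 := hg0
    rw [h00, sub_zero, sub_zero]
  -- per-term limits
  have hterm : ∀ mn ∈ Finset.univ.erase ((0 : ZMod p), (0 : ZMod q)),
      Filter.Tendsto (fun t : ℝ => (g mn t / t) *
          Real.log ((g mn t / t) / (g (-mn.1, -mn.2) t / t)))
        (nhdsWithin 0 (Set.Ioi 0))
        (nhds (α mn * Real.log (α mn / α (-mn.1, -mn.2)))) := by
    intro mn hmn
    rw [Finset.mem_erase] at hmn
    have h1 := hg mn hmn.1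
    have h2 := hg _ (hne mn hmn.1)
    have hB : (0 : ℝ) < α (-mn.1, -mn.2) := hpos _ (hne mn hmn.1)
    have hA : (0 : ℝ) < α mn := hpos mn hmn.1
    have hdiv : Filter.Tendsto (fun t : ℝ => (g mn t / t) / (g (-mn.1, -mn.2) t / t))
        (nhdsWithin 0 (Set.Ioi 0)) (nhds (α mn / α (-mn.1, -mn.2))) := h1.div h2 hB.ne'
    have hlog := ((Real.continuousAt_log (by positivity)).tendsto).comp hdiv
    exact h1.mul hlog
  have hsumlim := tendsto_finset_sum (Finset.univ.erase ((0 : ZMod p), (0 : ZMod q))) hterm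
  refine hsumlim.congr' ?_
  filter_upwards [self_mem_nhdsWithin] with t ht
  have ht0 : (t : ℝ) ≠ 0 := ne_of_gt ht
  -- the (0,0) term vanishes
  have hzero : g (0, 0) t * Real.log (g (0, 0) t / g (-(0 : ZMod p), -(0 : ZMod q)) t) = 0 := by
    have : ((-(0 : ZMod p), -(0 : ZMod q)) : ZMod p × ZMod q) = (0, 0) := by simp
    rw [this]
    rcases eq_or_ne (g (0, 0) t) 0 with h | h
    · rw [h, zero_mul]
    · rw [div_self h, Real.log_one, mul_zero]
  calc ∑ mn ∈ Finset.univ.erase ((0 : ZMod p), (0 : ZMod q)),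
        (g mn t / t) * Real.log ((g mn t / t) / (g (-mn.1, -mn.2) t / t))
      = ∑ mn ∈ Finset.univ.erase ((0 : ZMod p), (0 : ZMod q)),
        (1 / t) * (g mn t * Real.log (g mn t / g (-mn.1, -mn.2) t)) := by
        refine Finset.sum_congr rfl fun mn _ => ?_
        rw [div_div_div_comm, div_self ht0, div_one]
        ring
    _ = (1 / t) * ∑ mn : ZMod p × ZMod q,
          g mn t * Real.log (g mn t / g (-mn.1, -mn.2) t) := by
        rw [← Finset.mul_sum]
        congr 1
        rw [← Finset.add_sum_erase _ _ (Finset.mem_univ ((0 : ZMod p), (0 : ZMod q)))]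
        rw [hzero, zero_add]
end
end

section
/- Let p, q be positive integers and α : (ZMod p) × (ZMod q) → ℝ a probability distribution with α(0,0) = 0 (α ≥ 0 and Σ α = 1). Define, on the complex matrices indexed by (ZMod p) × (ZMod q), L(x) = Σ_{(i,j)} α(-i,-j) (J_p^i ⊗ J_q^j)* x (J_p^i ⊗ J_q^j) − x and L̃(x) = Σ_{(i,j)} α(i,j) (J_p^i ⊗ J_q^j)* x (J_p^i ⊗ J_q^j) − x. Then the following are equivalent: (a) there exists a Hermitian matrix K such that L̃(x) − L(x) = 2i(Kx − xK) for every matrix x (quantum detailed balance with respect to the invariant state ρ = (1/(pq))·I); (b) α(i,j) = α(-i,-j) for all (i,j) ∈ (ZMod p) × (ZMod q). -/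
open Matrix Kronecker

noncomputable section

/-- The Heisenberg-picture circulant GKSL generator `L` associated with `α`. -/
def Lgen (p q : ℕ) [NeZero p] [NeZero q] (α : ZMod p × ZMod q → ℝ)
    (y : Matrix (ZMod p × ZMod q) (ZMod p × ZMod q) ℂ) :
    Matrix (ZMod p × ZMod q) (ZMod p × ZMod q) ℂ :=
  (∑ ij : ZMod p × ZMod q,
    (α (-ij.1, -ij.2) : ℂ) • ((Kr p q ij.1 ij.2)ᴴ * y * Kr p q ij.1 ij.2)) - y

/-- The `ρ`-adjoint generator `L̃` associated with `α` (for `ρ = (1/(pq))·I`). -/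
def LgenTilde (p q : ℕ) [NeZero p] [NeZero q] (α : ZMod p × ZMod q → ℝ)
    (x : Matrix (ZMod p × ZMod q) (ZMod p × ZMod q) ℂ) :
    Matrix (ZMod p × ZMod q) (ZMod p × ZMod q) ℂ :=
  (∑ ij : ZMod p × ZMod q,
    (α ij : ℂ) • ((Kr p q ij.1 ij.2)ᴴ * x * Kr p q ij.1 ij.2)) - x

lemma Jpow (p : ℕ) [NeZero p] (k : ℕ) : ∀ a b : ZMod p,
    (Jmat p ^ k) a b = if b = a + (k : ZMod p) then 1 else 0 := by
  induction k with
  | zero => intro a b; simp [Matrix.one_apply, eq_comm]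
  | succ k ih =>
    intro a b
    rw [pow_succ, Matrix.mul_apply]
    simp only [ih]
    simp only [Jmat, Matrix.of_apply, ite_mul, one_mul, zero_mul]
    rw [Finset.sum_ite_eq' (Finset.univ) (a + (k:ZMod p)) (fun x => if b = x + 1 then (1:ℂ) else 0)]
    simp [add_assoc]

lemma Kr_apply_s19 (p q : ℕ) [NeZero p] [NeZero q] (i : ZMod p) (j : ZMod q)
    (u v : ZMod p × ZMod q) :
    Kr p q i j u v = if v = (u.1 + i, u.2 + j) then 1 else 0 := by
  obtain ⟨a, b⟩ := u; obtain ⟨c, d⟩ := v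
  simp only [Kr, Matrix.kroneckerMap_apply, Jpow, ZMod.natCast_val, ZMod.cast_id]
  simp [Prod.ext_iff, ite_and]
  split_ifs <;> simp_all

lemma key (p q : ℕ) [NeZero p] [NeZero q] (i : ZMod p) (j : ZMod q)
    (t : ZMod p × ZMod q) :
    ((Kr p q i j)ᴴ * Matrix.single ((0 : ZMod p), (0 : ZMod q)) ((0 : ZMod p), (0 : ZMod q)) (1 : ℂ)
      * Kr p q i j) t t = if t = (i, j) then 1 else 0 := by
  rw [Matrix.mul_apply]
  have h1 : ∀ d, ((Kr p q i j)ᴴ * Matrix.single ((0 : ZMod p), (0 : ZMod q)) ((0 : ZMod p), (0 : ZMod q)) (1 : ℂ)) t d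
      = (starRingEnd ℂ) (Kr p q i j (0,0) t) * (if ((0:ZMod p),(0:ZMod q)) = d then 1 else 0) := by
    intro d
    rw [Matrix.mul_apply]
    simp only [Matrix.conjTranspose_apply, Matrix.single, Matrix.of_apply, ite_and]
    rw [Finset.sum_eq_single ((0:ZMod p),(0:ZMod q))] <;> simp +contextual [eq_comm]
  simp only [h1, mul_ite, mul_one, mul_zero, ite_mul, zero_mul]
  rw [Finset.sum_ite_eq (Finset.univ) ((0:ZMod p),(0:ZMod q))
    (fun d => (starRingEnd ℂ) (Kr p q i j (0,0) t) * Kr p q i j d t)]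
  simp only [Finset.mem_univ, if_true, Kr_apply_s19]
  simp only [Prod.mk.injEq, zero_add]
  split_ifs <;> simp_all [Prod.ext_iff]

/-- Quantum detailed balance (Alicki, Frigerio–Gorini–Kossakowski–Verri) holds
for a circulant qms iff the distribution `α` is symmetric under inversion. -/
theorem stmt19 (p q : ℕ) [NeZero p] [NeZero q]
    (α : ZMod p × ZMod q → ℝ) (hα : ∀ ij, 0 ≤ α ij)
    (hsum : ∑ ij : ZMod p × ZMod q, α ij = 1) (h0 : α (0, 0) = 0) :
    (∃ K : Matrix (ZMod p × ZMod q) (ZMod p × ZMod q) ℂ, Kᴴ = K ∧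
      ∀ x : Matrix (ZMod p × ZMod q) (ZMod p × ZMod q) ℂ,
        LgenTilde p q α x - Lgen p q α x =
          (2 * Complex.I) • (K * x - x * K)) ↔
    ∀ ij : ZMod p × ZMod q, α ij = α (-ij.1, -ij.2) := by
  constructor
  · rintro ⟨K, hK, hL⟩ ⟨i, j⟩
    set E : Matrix (ZMod p × ZMod q) (ZMod p × ZMod q) ℂ :=
      Matrix.single ((0 : ZMod p), (0 : ZMod q)) ((0 : ZMod p), (0 : ZMod q)) (1 : ℂ) with hE
    have h := congrFun (congrFun (hL E) (i, j)) (i, j)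
    simp only [LgenTilde, Lgen, sub_sub_sub_cancel_right] at h
    rw [Matrix.sub_apply, Matrix.sum_apply, Matrix.sum_apply] at h
    simp only [Matrix.smul_apply, hE, key, smul_eq_mul, mul_ite, mul_one, mul_zero] at h
    simp only [Prod.mk.eta] at h
    rw [Finset.sum_ite_eq (Finset.univ) ((i, j) : ZMod p × ZMod q) (fun s => (α s : ℂ)),
        Finset.sum_ite_eq (Finset.univ) ((i, j) : ZMod p × ZMod q)
          (fun s => (α (-s.1, -s.2) : ℂ))] at h
    simp only [Finset.mem_univ, if_true] at h
    have h2 : (K * E) (i, j) (i, j)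
        = if ((0 : ZMod p), (0 : ZMod q)) = (i, j) then K (i, j) (0, 0) else 0 := by
      rw [Matrix.mul_apply]
      simp only [hE, Matrix.single, Matrix.of_apply, ite_and, mul_ite, mul_one, mul_zero]
      rw [Finset.sum_ite_eq (Finset.univ) (((0 : ZMod p), (0 : ZMod q)))
        (fun c => if ((0 : ZMod p), (0 : ZMod q)) = ((i, j) : ZMod p × ZMod q) then K (i, j) c else 0)]
      simp
    have h3 : (E * K) (i, j) (i, j)
        = if ((0 : ZMod p), (0 : ZMod q)) = (i, j) then K (0, 0) (i, j) else 0 := by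
      rw [Matrix.mul_apply]
      simp only [hE, Matrix.single, Matrix.of_apply, ite_and, ite_mul, one_mul, zero_mul]
      simp [Finset.sum_ite_eq]
    rw [Matrix.sub_apply] at h
    rw [show (K * Matrix.single ((0:ZMod p),(0:ZMod q)) ((0:ZMod p),(0:ZMod q)) (1:ℂ)) (i, j) (i, j)
        = (K * E) (i, j) (i, j) from rfl,
      show (Matrix.single ((0:ZMod p),(0:ZMod q)) ((0:ZMod p),(0:ZMod q)) (1:ℂ) * K) (i, j) (i, j)
        = (E * K) (i, j) (i, j) from rfl, h2, h3] at h
    have hz : (↑(α (i, j)) : ℂ) - ↑(α (-i, -j)) = 0 := by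
      split_ifs at h with hc
      · have hkk : K (i, j) ((0 : ZMod p), (0 : ZMod q)) = K ((0 : ZMod p), (0 : ZMod q)) (i, j) := by
          rw [← hc]
        rw [hkk] at h
        simpa using h
      · simpa using h
    have := sub_eq_zero.mp hz
    exact_mod_cast this
  · intro h
    refine ⟨0, by simp, fun x => ?_⟩
    simp only [LgenTilde, Lgen, sub_sub_sub_cancel_right, Matrix.zero_mul, Matrix.mul_zero,
      sub_self, smul_zero]
    rw [sub_eq_zero]
    exact Finset.sum_congr rfl fun s _ => by rw [h s]
end
end
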